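/- arXiv:1709.05977 — 2 statements merged into one kernel-verified Lean document; each statement's English description precedes it below -/
import Mathlib

section
/- Let X be a real Hilbert space and let G : X → X* be continuously Fréchet differentiable with Lipschitz-continuous derivative: ‖δG(u) − δG(v)‖_{L(X,X*)} ≤ M‖u − v‖ for all u, v ∈ X. Suppose ū ∈ X satisfies ‖G(ū)‖_{X*} ≤ η and the coercivity bound ⟨δG(ū)v, v⟩ ≥ γ‖v‖² for all v ∈ X, where the constants M, η, γ > 0 satisfy 2Mη/γ² < 1. Then there exists u ∈ X such that G(u) = 0, ‖u − ū‖ ≤ 2η/γ, and ⟨δG(u)v, v⟩ ≥ (1 − 2Mη/γ²)γ‖v‖² for all v ∈ X. -/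
open scoped RealInnerProductSpace

/-- Lax–Milgram style solvability with quantitative bound. -/
lemma solve_aux' {X : Type*} [NormedAddCommGroup X] [InnerProductSpace ℝ X] [CompleteSpace X]
    (B : X →L[ℝ] (X →L[ℝ] ℝ)) (c : ℝ) (hc : 0 < c) (hcoer : ∀ v : X, c * ‖v‖ ^ 2 ≤ B v v)
    (f : X →L[ℝ] ℝ) : ∃ w : X, B w = f ∧ c * ‖w‖ ≤ ‖f‖ := by
  have hco : IsCoercive B := ⟨c, hc, fun u => by have := hcoer u; nlinarith [this]⟩
  set e := hco.continuousLinearEquivOfBilin with he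
  set z := (InnerProductSpace.toDual ℝ X).symm f with hz
  have key : ∀ w : X, B (e.symm z) w = f w := by
    intro w
    have h1 : (inner ℝ (e (e.symm z)) w : ℝ) = B (e.symm z) w :=
      hco.continuousLinearEquivOfBilin_apply _ w
    have h2 : e (e.symm z) = z := e.apply_symm_apply z
    rw [h2] at h1
    have h3 : (inner ℝ z w : ℝ) = f w := by rw [hz]; simp
    rw [← h1, h3]
  have hBw : B (e.symm z) = f := by ext w; exact key w
  refine ⟨e.symm z, hBw, ?_⟩
  rcases eq_or_ne (e.symm z) 0 with h0 | h0
  · simp [h0]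
  · have hn : 0 < ‖e.symm z‖ := norm_pos_iff.mpr h0
    have h4 : c * ‖e.symm z‖ ^ 2 ≤ B (e.symm z) (e.symm z) := hcoer _
    have h5 : B (e.symm z) (e.symm z) = f (e.symm z) := by rw [hBw]
    have h6 : f (e.symm z) ≤ ‖f (e.symm z)‖ := le_abs_self _
    have h7 : ‖f (e.symm z)‖ ≤ ‖f‖ * ‖e.symm z‖ := f.le_opNorm _
    nlinarith [h4, h5, h6, h7, hn]

/-- Quadratic Taylor remainder bound for a map with Lipschitz derivative. -/
lemma taylor_aux' {X : Type*} [NormedAddCommGroup X] [InnerProductSpace ℝ X]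
    (G : X → (X →L[ℝ] ℝ)) (δG : X → X →L[ℝ] (X →L[ℝ] ℝ))
    (hdiff : ∀ u : X, HasFDerivAt G (δG u) u) (M : ℝ) (hM : 0 ≤ M)
    (hLip : ∀ u v : X, ‖δG u - δG v‖ ≤ M * ‖u - v‖) (x y : X) :
    ‖G y - G x - δG x (y - x)‖ ≤ M / 2 * ‖y - x‖ ^ 2 := by
  set h := y - x with hh
  -- derivative of the path
  have hline : ∀ t : ℝ, HasDerivAt (fun s : ℝ => x + s • h) h t := by
    intro t
    simpa using ((hasDerivAt_id t).smul_const h).const_add x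
  set F : ℝ → (X →L[ℝ] ℝ) := fun t => G (x + t • h) - t • (δG x h) with hF
  set F' : ℝ → (X →L[ℝ] ℝ) := fun t => δG (x + t • h) h - δG x h with hF'
  have hder : ∀ t : ℝ, HasDerivAt F (F' t) t := by
    intro t
    have h1 : HasDerivAt (fun s : ℝ => G (x + s • h)) (δG (x + t • h) h) t :=
      (hdiff (x + t • h)).comp_hasDerivAt t (hline t)
    have h2 : HasDerivAt (fun s : ℝ => s • (δG x h)) (δG x h) t := by
      simpa using (hasDerivAt_id t).smul_const (δG x h)
    exact h1.sub h2
  -- continuity of F'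
  have hδcont : Continuous δG := by
    have : LipschitzWith M.toNNReal δG := by
      apply LipschitzWith.of_dist_le_mul
      intro u v
      rw [dist_eq_norm, dist_eq_norm]
      simpa [Real.coe_toNNReal _ hM] using hLip u v
    exact this.continuous
  have hcont : Continuous F' := by
    apply Continuous.sub
    · exact ((ContinuousLinearMap.apply ℝ (X →L[ℝ] ℝ) h).continuous).comp
        (hδcont.comp (continuous_const.add (continuous_id.smul continuous_const)))
    · exact continuous_const
  have hint : IntervalIntegrable F' MeasureTheory.volume 0 1 := hcont.intervalIntegrable 0 1
  have hFTC : ∫ t in (0:ℝ)..1, F' t = F 1 - F 0 :=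
    intervalIntegral.integral_eq_sub_of_hasDerivAt (fun t _ => hder t) hint
  have hF10 : F 1 - F 0 = G y - G x - δG x h := by
    simp only [hF, hh, one_smul, zero_smul, sub_zero]
    simp only [show x + (y - x) = y by abel, show x + (0:ℝ) • (y - x) = x by simp]
    abel
  -- bound the integral
  have hbound : ‖∫ t in (0:ℝ)..1, F' t‖ ≤ |∫ t in (0:ℝ)..1, (M * ‖h‖ ^ 2) * t| := by
    apply intervalIntegral.norm_integral_le_abs_of_norm_le
    · filter_upwards [MeasureTheory.ae_restrict_mem measurableSet_Ioc] with t ht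
      rw [Set.uIoc_of_le (by norm_num : (0:ℝ) ≤ 1)] at ht
      have ht0 : 0 ≤ t := ht.1.le
      have h1 : F' t = (δG (x + t • h) - δG x) h := by simp [hF']
      rw [h1]
      calc ‖(δG (x + t • h) - δG x) h‖ ≤ ‖δG (x + t • h) - δG x‖ * ‖h‖ :=
            ContinuousLinearMap.le_opNorm _ _
        _ ≤ (M * ‖x + t • h - x‖) * ‖h‖ := by
            apply mul_le_mul_of_nonneg_right (hLip _ _) (norm_nonneg _)
        _ = (M * ‖h‖ ^ 2) * t := by
            simp [norm_smul, abs_of_nonneg ht0]; ring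
    · exact ((continuous_const.mul continuous_id).intervalIntegrable 0 1)
  have hval : ∫ t in (0:ℝ)..1, (M * ‖h‖ ^ 2) * t = M / 2 * ‖h‖ ^ 2 := by
    rw [intervalIntegral.integral_const_mul, integral_id]
    ring
  rw [hFTC, hF10] at hbound
  rw [hval] at hbound
  calc ‖G y - G x - δG x h‖ ≤ |M / 2 * ‖h‖ ^ 2| := hbound
    _ = M / 2 * ‖h‖ ^ 2 := abs_of_nonneg (by positivity)
/-- The Kantorovich majorant polynomial. -/
noncomputable def pq (M γ η t : ℝ) : ℝ := M / 2 * t ^ 2 - γ * t + η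

/-- The Kantorovich scalar Newton majorant sequence. -/
noncomputable def newtMaj (M γ η : ℝ) : ℕ → ℝ
  | 0 => 0
  | k + 1 => newtMaj M γ η k + pq M γ η (newtMaj M γ η k) / (γ - M * newtMaj M γ η k)

lemma newtMaj_zero (M γ η : ℝ) : newtMaj M γ η 0 = 0 := rfl

lemma newtMaj_succ (M γ η : ℝ) (k : ℕ) :
    newtMaj M γ η (k + 1) =
      newtMaj M γ η k + pq M γ η (newtMaj M γ η k) / (γ - M * newtMaj M γ η k) := rfl

lemma pq_newton_step (M γ η s : ℝ) (hden : γ - M * s ≠ 0) :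
    pq M γ η (s + pq M γ η s / (γ - M * s)) = M / 2 * (pq M γ η s / (γ - M * s)) ^ 2 := by
  simp only [pq]
  field_simp
  ring

lemma newtMaj_facts (M γ η D : ℝ) (hM : 0 < M) (hγ : 0 < γ) (hη : 0 < η)
    (hDpos : 0 < D) (hD2 : D ^ 2 = γ ^ 2 - 2 * M * η) :
    ∀ k, 0 ≤ newtMaj M γ η k ∧ newtMaj M γ η k ≤ (γ - D) / M := by
  have hDγ : D < γ := by nlinarith
  have hpstar : pq M γ η ((γ - D) / M) = 0 := by
    rw [pq]; field_simp; nlinarith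
  intro k
  induction k with
  | zero =>
    refine ⟨le_refl 0, ?_⟩
    have : 0 < (γ - D) / M := div_pos (by linarith) hM
    simpa [newtMaj] using this.le
  | succ k ih =>
    obtain ⟨h0, h1⟩ := ih
    set s := newtMaj M γ η k with hs
    have hMs : M * s ≤ γ - D := by
      have := mul_le_mul_of_nonneg_left h1 hM.le
      calc M * s ≤ M * ((γ - D) / M) := this
        _ = γ - D := by field_simp
    have hdenpos : 0 < γ - M * s := by linarith
    have hpnn : 0 ≤ pq M γ η s := by
      have hfac : 0 ≤ γ - M / 2 * (s + (γ - D) / M) := by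
        have h2 : M / 2 * (s + (γ - D) / M) ≤ M / 2 * ((γ - D) / M + (γ - D) / M) := by
          apply mul_le_mul_of_nonneg_left _ (by linarith)
          linarith
        have h3 : M / 2 * ((γ - D) / M + (γ - D) / M) = γ - D := by field_simp; ring
        linarith
      have hfac2 : 0 ≤ ((γ - D) / M - s) := by linarith
      have := mul_nonneg hfac2 hfac
      rw [pq]
      rw [pq] at hpstar
      have hexp : ((γ - D) / M - s) * (γ - M / 2 * (s + (γ - D) / M)) =
          (M / 2 * s ^ 2 - γ * s + η) - (M / 2 * ((γ - D) / M) ^ 2 - γ * ((γ - D) / M) + η) := by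
        field_simp
        ring
      rw [hexp] at this
      linarith
    have hΔnn : 0 ≤ pq M γ η s / (γ - M * s) := div_nonneg hpnn hdenpos.le
    have hsucc : newtMaj M γ η (k + 1) = s + pq M γ η s / (γ - M * s) := rfl
    refine ⟨by rw [hsucc]; linarith, ?_⟩
    rw [hsucc]
    have hkey : pq M γ η s ≤ ((γ - D) / M - s) * (γ - M * s) := by
      have hexp : ((γ - D) / M - s) * (γ - M * s) - pq M γ η s =
          M / 2 * ((γ - D) / M - s) ^ 2 - pq M γ η ((γ - D) / M) := by
        rw [pq, pq]; field_simp; ring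
      nlinarith [sq_nonneg ((γ - D) / M - s), hpstar, hexp]
    have := (div_le_iff₀ hdenpos).mpr hkey
    linarith

lemma newtMaj_mono (M γ η D : ℝ) (hM : 0 < M) (hγ : 0 < γ) (hη : 0 < η)
    (hDpos : 0 < D) (hD2 : D ^ 2 = γ ^ 2 - 2 * M * η) :
    ∀ k, newtMaj M γ η k ≤ newtMaj M γ η (k + 1) ∧ 0 ≤ pq M γ η (newtMaj M γ η k) ∧
      D ≤ γ - M * newtMaj M γ η k := by
  intro k
  obtain ⟨h0, h1⟩ := newtMaj_facts M γ η D hM hγ hη hDpos hD2 k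
  set s := newtMaj M γ η k with hs
  have hDγ : D < γ := by nlinarith
  have hMs : M * s ≤ γ - D := by
    have := mul_le_mul_of_nonneg_left h1 hM.le
    calc M * s ≤ M * ((γ - D) / M) := this
      _ = γ - D := by field_simp
  have hden : D ≤ γ - M * s := by linarith
  have hdenpos : 0 < γ - M * s := by linarith
  have hpstar : pq M γ η ((γ - D) / M) = 0 := by
    rw [pq]; field_simp; nlinarith
  have hpnn : 0 ≤ pq M γ η s := by
    have hexp : ((γ - D) / M - s) * (γ - M / 2 * (s + (γ - D) / M)) =
        pq M γ η s - pq M γ η ((γ - D) / M) := by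
      rw [pq, pq]; field_simp; ring
    have hfac : 0 ≤ γ - M / 2 * (s + (γ - D) / M) := by
      have h2 : M / 2 * (s + (γ - D) / M) ≤ M / 2 * ((γ - D) / M + (γ - D) / M) := by
        apply mul_le_mul_of_nonneg_left _ (by linarith)
        linarith
      have h3 : M / 2 * ((γ - D) / M + (γ - D) / M) = γ - D := by field_simp; ring
      linarith
    nlinarith [mul_nonneg (by linarith : (0:ℝ) ≤ (γ - D) / M - s) hfac, hexp, hpstar]
  have hsucc : newtMaj M γ η (k + 1) = s + pq M γ η s / (γ - M * s) := rfl
  refine ⟨?_, hpnn, hden⟩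
  rw [hsucc]
  have := div_nonneg hpnn hdenpos.le
  linarith

set_option maxHeartbeats 1000000 in
/-- **Inverse function theorem / quantitative existence result.**
Let `X` be a real Hilbert space, `G : X → X*` continuously Fréchet differentiable with
Lipschitz derivative `δG` (constant `M`). If `ubar` satisfies `‖G ubar‖ ≤ η`, the coercivity
`⟨δG(ubar)v, v⟩ ≥ γ‖v‖²`, and `2Mη/γ² < 1`, then there is `u` with `G u = 0`,
`‖u - ubar‖ ≤ 2η/γ`, and `⟨δG(u)v, v⟩ ≥ (1 - 2Mη/γ²)γ‖v‖²`. -/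
theorem stmt_0 {X : Type*} [NormedAddCommGroup X] [InnerProductSpace ℝ X] [CompleteSpace X]
    (G : X → (X →L[ℝ] ℝ)) (δG : X → X →L[ℝ] (X →L[ℝ] ℝ))
    (hdiff : ∀ u : X, HasFDerivAt G (δG u) u)
    (M η γ : ℝ) (hM : 0 < M) (hη : 0 < η) (hγ : 0 < γ)
    (hLip : ∀ u v : X, ‖δG u - δG v‖ ≤ M * ‖u - v‖)
    (ubar : X) (hcons : ‖G ubar‖ ≤ η)
    (hstab : ∀ v : X, γ * ‖v‖ ^ 2 ≤ δG ubar v v)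
    (hrel : 2 * M * η / γ ^ 2 < 1) :
    ∃ u : X, G u = 0 ∧ ‖u - ubar‖ ≤ 2 * η / γ ∧
      ∀ v : X, (1 - 2 * M * η / γ ^ 2) * γ * ‖v‖ ^ 2 ≤ δG u v v := by
  classical
  have hγ2 : 2 * M * η < γ ^ 2 := by
    rw [div_lt_one (by positivity)] at hrel; exact hrel
  set D : ℝ := Real.sqrt (γ ^ 2 - 2 * M * η) with hDdef
  have hD2 : D ^ 2 = γ ^ 2 - 2 * M * η := Real.sq_sqrt (by nlinarith)
  have hDpos : 0 < D := Real.sqrt_pos.mpr (by nlinarith)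
  have hDγ : D < γ := by nlinarith
  have htstar_le : (γ - D) / M ≤ 2 * η / γ := by
    rw [div_le_div_iff₀ hM (by positivity)]
    nlinarith [hD2, hDpos]
  -- coercivity transfer
  have hcoer : ∀ x v : X, (γ - M * ‖x - ubar‖) * ‖v‖ ^ 2 ≤ δG x v v := by
    intro x v
    have h1 : γ * ‖v‖ ^ 2 ≤ δG ubar v v := hstab v
    have h2 : |((δG x - δG ubar) v) v| ≤ M * ‖x - ubar‖ * ‖v‖ ^ 2 := by
      calc |((δG x - δG ubar) v) v| ≤ ‖(δG x - δG ubar) v‖ * ‖v‖ :=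
            ((δG x - δG ubar) v).le_opNorm v
        _ ≤ (‖δG x - δG ubar‖ * ‖v‖) * ‖v‖ :=
            mul_le_mul_of_nonneg_right ((δG x - δG ubar).le_opNorm v) (norm_nonneg _)
        _ ≤ (M * ‖x - ubar‖ * ‖v‖) * ‖v‖ := by
            have := hLip x ubar
            have h3 : 0 ≤ ‖v‖ := norm_nonneg v
            nlinarith
        _ = M * ‖x - ubar‖ * ‖v‖ ^ 2 := by ring
    have h4 : ((δG x - δG ubar) v) v = δG x v v - δG ubar v v := by simp
    have h5 := abs_le.mp h2
    nlinarith [h5.1]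
  -- Newton step map and iterates
  set step : X → X := fun x =>
    if hx : ∃ w : X, δG x w = G x ∧ (γ - M * ‖x - ubar‖) * ‖w‖ ≤ ‖G x‖ then hx.choose else 0
    with hstepdef
  set u : ℕ → X := fun k => (fun x => x - step x)^[k] ubar with hudef
  have hu0 : u 0 = ubar := rfl
  have hus : ∀ k, u (k + 1) = u k - step (u k) := by
    intro k
    rw [hudef]
    simp only [Function.iterate_succ_apply']
  -- majorant sequence facts
  set t : ℕ → ℝ := newtMaj M γ η with htdef
  have ht0 : t 0 = 0 := newtMaj_zero M γ η
  have hts : ∀ k, t (k + 1) = t k + pq M γ η (t k) / (γ - M * t k) :=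
    fun k => newtMaj_succ M γ η k
  have htf : ∀ k, 0 ≤ t k ∧ t k ≤ (γ - D) / M :=
    newtMaj_facts M γ η D hM hγ hη hDpos hD2
  have htm : ∀ k, t k ≤ t (k + 1) ∧ 0 ≤ pq M γ η (t k) ∧ D ≤ γ - M * t k :=
    newtMaj_mono M γ η D hM hγ hη hDpos hD2
  -- one Newton step
  have key : ∀ k, (‖u k - ubar‖ ≤ t k ∧ ‖G (u k)‖ ≤ pq M γ η (t k)) →
      ‖u (k + 1) - u k‖ ≤ t (k + 1) - t k ∧ ‖u (k + 1) - ubar‖ ≤ t (k + 1) ∧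
      ‖G (u (k + 1))‖ ≤ pq M γ η (t (k + 1)) := by
    intro k ⟨hk1, hk2⟩
    have hden1 : 0 < γ - M * t k := lt_of_lt_of_le hDpos (htm k).2.2
    have hMle : M * ‖u k - ubar‖ ≤ M * t k := mul_le_mul_of_nonneg_left hk1 hM.le
    have hcpos : 0 < γ - M * ‖u k - ubar‖ := by linarith
    have hex : ∃ w : X, δG (u k) w = G (u k) ∧
        (γ - M * ‖u k - ubar‖) * ‖w‖ ≤ ‖G (u k)‖ :=
      solve_aux' (δG (u k)) _ hcpos (fun v => hcoer (u k) v) (G (u k))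
    have hstep_eq : step (u k) = hex.choose := by
      rw [hstepdef]
      exact dif_pos hex
    obtain ⟨hw1, hw2⟩ := hex.choose_spec
    set w := hex.choose with hwdef
    have hΔeq : t (k + 1) - t k = pq M γ η (t k) / (γ - M * t k) := by rw [hts]; ring
    have hwle : ‖w‖ ≤ pq M γ η (t k) / (γ - M * t k) := by
      rw [le_div_iff₀ hden1]
      have h1 : (γ - M * t k) * ‖w‖ ≤ (γ - M * ‖u k - ubar‖) * ‖w‖ :=
        mul_le_mul_of_nonneg_right (by linarith) (norm_nonneg w)
      calc ‖w‖ * (γ - M * t k) = (γ - M * t k) * ‖w‖ := by ring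
        _ ≤ (γ - M * ‖u k - ubar‖) * ‖w‖ := h1
        _ ≤ ‖G (u k)‖ := hw2
        _ ≤ pq M γ η (t k) := hk2
    have hyx : u (k + 1) - u k = -w := by rw [hus k, hstep_eq]; abel
    have hstepn : ‖u (k + 1) - u k‖ ≤ t (k + 1) - t k := by
      rw [hyx, norm_neg, hΔeq]; exact hwle
    refine ⟨hstepn, ?_, ?_⟩
    · have h2 : u (k + 1) - ubar = (u k - ubar) + (u (k + 1) - u k) := by abel
      calc ‖u (k + 1) - ubar‖ = ‖(u k - ubar) + (u (k + 1) - u k)‖ := by rw [h2]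
        _ ≤ ‖u k - ubar‖ + ‖u (k + 1) - u k‖ := norm_add_le _ _
        _ ≤ t k + (t (k + 1) - t k) := add_le_add hk1 hstepn
        _ = t (k + 1) := by ring
    · have hTay := taylor_aux' G δG hdiff M hM.le hLip (u k) (u (k + 1))
      have hδ : δG (u k) (u (k + 1) - u k) = -(G (u k)) := by
        rw [hyx, map_neg, hw1]
      have hrem : G (u (k + 1)) - G (u k) - δG (u k) (u (k + 1) - u k) = G (u (k + 1)) := by
        rw [hδ]; abel
      rw [hrem] at hTay
      have hq : pq M γ η (t (k + 1)) = M / 2 * (pq M γ η (t k) / (γ - M * t k)) ^ 2 := by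
        rw [hts]
        exact pq_newton_step M γ η (t k) hden1.ne'
      calc ‖G (u (k + 1))‖ ≤ M / 2 * ‖u (k + 1) - u k‖ ^ 2 := hTay
        _ ≤ M / 2 * (pq M γ η (t k) / (γ - M * t k)) ^ 2 := by
            have h3 : ‖u (k + 1) - u k‖ ≤ pq M γ η (t k) / (γ - M * t k) := by
              rw [hyx, norm_neg]; exact hwle
            have h4 : 0 ≤ ‖u (k + 1) - u k‖ := norm_nonneg _
            exact mul_le_mul_of_nonneg_left (pow_le_pow_left₀ h4 h3 2) (by positivity)
        _ = pq M γ η (t (k + 1)) := hq.symm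
  -- invariants for all k
  have R : ∀ k, ‖u k - ubar‖ ≤ t k ∧ ‖G (u k)‖ ≤ pq M γ η (t k) := by
    intro k
    induction k with
    | zero =>
      have hq0 : pq M γ η (t 0) = η := by rw [ht0, pq]; ring
      exact ⟨by rw [hu0, ht0]; simp, by rw [hu0, hq0]; exact hcons⟩
    | succ k ih =>
      obtain ⟨-, h2, h3⟩ := key k ih
      exact ⟨h2, h3⟩
  have hstepb : ∀ k, ‖u (k + 1) - u k‖ ≤ t (k + 1) - t k := fun k => (key k (R k)).1
  -- convergence of the majorant sequence
  have hbdd : BddAbove (Set.range t) := ⟨(γ - D) / M, by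
    rintro x ⟨k, rfl⟩; exact (htf k).2⟩
  have hmono : Monotone t := monotone_nat_of_le_succ fun k => (htm k).1
  set L : ℝ := ⨆ k, t k with hLdef
  have hL : Filter.Tendsto t Filter.atTop (nhds L) := tendsto_atTop_ciSup hmono hbdd
  have htleL : ∀ k, t k ≤ L := fun k => le_ciSup hbdd k
  -- Cauchy sequence
  have hdist : ∀ m n, m ≤ n → dist (u n) (u m) ≤ t n - t m := by
    intro m n hmn
    induction n, hmn using Nat.le_induction with
    | base => simp
    | succ n hmn ih =>
      calc dist (u (n + 1)) (u m) ≤ dist (u (n + 1)) (u n) + dist (u n) (u m) :=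
            dist_triangle _ _ _
        _ ≤ (t (n + 1) - t n) + (t n - t m) := by
            refine add_le_add ?_ ih
            rw [dist_eq_norm]
            exact hstepb n
        _ = t (n + 1) - t m := by ring
  have hcauchy : CauchySeq u := by
    apply cauchySeq_of_le_tendsto_0 (fun N => L - t N)
    · intro n m N hn hm
      rcases le_total m n with h | h
      · calc dist (u n) (u m) ≤ t n - t m := hdist m n h
          _ ≤ L - t N := by
              have := htleL n
              have := hmono hm
              linarith
      · calc dist (u n) (u m) = dist (u m) (u n) := dist_comm _ _
          _ ≤ t m - t n := hdist n m h
          _ ≤ L - t N := by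
              have := htleL m
              have := hmono hn
              linarith
    · have : Filter.Tendsto (fun N => L - t N) Filter.atTop (nhds (L - L)) :=
        Filter.Tendsto.sub tendsto_const_nhds hL
      simpa using this
  obtain ⟨uu, huu⟩ := cauchySeq_tendsto_of_complete hcauchy
  -- G is continuous
  have hGcont : Continuous G := continuous_iff_continuousAt.mpr fun x => (hdiff x).continuousAt
  -- `pq (t k)` tends to 0
  have hpq0 : Filter.Tendsto (fun k => pq M γ η (t k)) Filter.atTop (nhds 0) := by
    have heq : ∀ k, pq M γ η (t k) = (γ - M * t k) * (t (k + 1) - t k) := by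
      intro k
      have hden1 : 0 < γ - M * t k := lt_of_lt_of_le hDpos (htm k).2.2
      rw [hts]
      field_simp
      ring
    have h1 : Filter.Tendsto (fun k => t (k + 1)) Filter.atTop (nhds L) :=
      hL.comp (Filter.tendsto_add_atTop_nat 1)
    have h2 : Filter.Tendsto (fun k => (γ - M * t k) * (t (k + 1) - t k))
        Filter.atTop (nhds ((γ - M * L) * (L - L))) :=
      Filter.Tendsto.mul (Filter.Tendsto.sub tendsto_const_nhds
        (Filter.Tendsto.const_mul M hL)) (Filter.Tendsto.sub h1 hL)
    have h3 : (γ - M * L) * (L - L) = 0 := by ring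
    rw [h3] at h2
    exact h2.congr (fun k => (heq k).symm)
  -- G uu = 0
  have hGuu : G uu = 0 := by
    have h1 : Filter.Tendsto (fun k => ‖G (u k)‖) Filter.atTop (nhds ‖G uu‖) :=
      ((hGcont.tendsto uu).comp huu).norm
    have h2 : ‖G uu‖ ≤ 0 :=
      le_of_tendsto_of_tendsto' h1 hpq0 fun k => (R k).2
    have := le_antisymm h2 (norm_nonneg _)
    rwa [norm_eq_zero] at this
  -- distance bound
  have hdistuu : ‖uu - ubar‖ ≤ 2 * η / γ := by
    have h1 : Filter.Tendsto (fun k => ‖u k - ubar‖) Filter.atTop (nhds ‖uu - ubar‖) :=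
      ((huu.sub tendsto_const_nhds).norm)
    apply le_of_tendsto h1
    filter_upwards with k
    exact ((R k).1.trans (htf k).2).trans htstar_le
  refine ⟨uu, hGuu, hdistuu, ?_⟩
  intro v
  have h1 := hcoer uu v
  have h2 : (1 - 2 * M * η / γ ^ 2) * γ = γ - 2 * M * η / γ := by
    field_simp
  have h3 : M * ‖uu - ubar‖ ≤ M * (2 * η / γ) := mul_le_mul_of_nonneg_left hdistuu hM.le
  have h4 : M * (2 * η / γ) = 2 * M * η / γ := by ring
  have h5 : (1 - 2 * M * η / γ ^ 2) * γ ≤ γ - M * ‖uu - ubar‖ := by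
    rw [h2]; linarith [h3.trans_eq h4]
  calc (1 - 2 * M * η / γ ^ 2) * γ * ‖v‖ ^ 2 ≤ (γ - M * ‖uu - ubar‖) * ‖v‖ ^ 2 :=
        mul_le_mul_of_nonneg_right h5 (sq_nonneg _)
    _ ≤ δG uu v v := h1
end

section
/- Let R > 0, M ≥ 0, and let (a_k)_{k ∈ ℤ} be complex numbers with ∑_{k ∈ ℤ} |a_k|² ≤ M². Let w(z) := ∑_{k ∈ ℤ} a_k (R/|z|)^{|k|} (z/|z|)^k on {z ∈ ℂ : |z| > R}. Then there is an absolute constant C > 0 (independent of R, M and the coefficients) such that the second derivative of w satisfies ‖D²w(z)‖ ≤ C M R |z|^{-3} for all z with |z| ≥ (3/2)R. -/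
open Complex

lemma isPreconnected_ext {r : ℝ} (hr : 0 ≤ r) :
    IsPreconnected {w : ℂ | r < ‖w‖} := by
  have h2 : 1 < Module.rank ℝ ℂ := by
    rw [rank_real_complex]; exact_mod_cast Nat.one_lt_ofNat
  have hconn : IsConnected ({(0:ℂ)}ᶜ) := isConnected_compl_singleton_of_one_lt_rank h2 0
  have habs : ∀ (t : ℝ) (w : ℂ), 0 ≤ t → ‖t • w‖ = t * ‖w‖ := by
    intro t w ht
    rw [Complex.real_smul, norm_mul, Complex.norm_real, Real.norm_eq_abs, _root_.abs_of_nonneg ht]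
  have key : (fun w : ℂ => ((r + ‖w‖) / ‖w‖) • w) '' ({(0:ℂ)}ᶜ)
      = {w : ℂ | r < ‖w‖} := by
    ext z
    constructor
    · rintro ⟨w, hw, rfl⟩
      have hw0 : w ≠ 0 := hw
      have hA : 0 < ‖w‖ := norm_pos_iff.mpr hw0
      have ht : 0 ≤ (r + ‖w‖) / ‖w‖ :=
        div_nonneg (by linarith) hA.le
      have : ‖((r + ‖w‖) / ‖w‖) • w‖
          = r + ‖w‖ := by
        rw [habs _ _ ht, div_mul_cancel₀]
        exact hA.ne'
      simp only [Set.mem_setOf_eq, this]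
      linarith
    · intro hz
      have hz' : r < ‖z‖ := hz
      have hA : 0 < ‖z‖ := lt_of_le_of_lt hr hz'
      have hz0 : z ≠ 0 := by
        intro h; rw [h] at hA; simp at hA
      refine ⟨((‖z‖ - r) / ‖z‖) • z, ?_, ?_⟩
      · have : ((‖z‖ - r) / ‖z‖) ≠ 0 := by
          apply div_ne_zero <;> [linarith; exact hA.ne']
        simp only [Set.mem_compl_iff, Set.mem_singleton_iff]
        exact smul_ne_zero this hz0
      · have hAw : ‖((‖z‖ - r) / ‖z‖) • z‖
            = ‖z‖ - r := by
          rw [habs _ _ (div_nonneg (by linarith) hA.le), div_mul_cancel₀]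
          exact hA.ne'
        show ((r + ‖((‖z‖ - r) / ‖z‖) • z‖) /
            ‖((‖z‖ - r) / ‖z‖) • z‖) •
            (((‖z‖ - r) / ‖z‖) • z) = z
        rw [hAw, smul_smul]
        have : (r + (‖z‖ - r)) / (‖z‖ - r)
            * ((‖z‖ - r) / ‖z‖) = 1 := by
          field_simp
          have hne' : ‖z‖ - r ≠ 0 := by linarith
          rw [mul_div_cancel_left₀ _ hne']; ring
        rw [this, one_smul]
  rw [← key]
  exact (hconn.isPreconnected).image _ (by
    apply ContinuousOn.fun_smul
    · apply ContinuousOn.div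
      · exact (continuous_const.add continuous_norm).continuousOn
      · exact continuous_norm.continuousOn
      · intro w hw
        exact norm_ne_zero_iff.mpr hw
    · exact continuousOn_id)

lemma norm_mul_zpow_neg (c w : ℂ) (m : ℕ) :
    ‖c * w ^ (-(m:ℤ))‖ = ‖c‖ * (‖w‖ ^ m)⁻¹ := by
  rw [norm_mul, norm_zpow, zpow_neg, zpow_natCast]

lemma sumNN {q : ℝ} (h0 : 0 ≤ q) (h1 : q < 1) :
    Summable (fun n : ℕ => (n : ℝ) * ((n : ℝ) + 1) * q ^ n) := by
  have h2 := summable_pow_mul_geometric_of_norm_lt_one (R := ℝ) 2 (r := q)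
    (by rwa [Real.norm_eq_abs, _root_.abs_of_nonneg h0])
  have h3 := summable_pow_mul_geometric_of_norm_lt_one (R := ℝ) 1 (r := q)
    (by rwa [Real.norm_eq_abs, _root_.abs_of_nonneg h0])
  refine (h2.add h3).congr fun n => ?_
  ring

lemma core {R M : ℝ} (hR : 0 < R) (hM : 0 ≤ M) (c : ℕ → ℂ)
    (hc : ∀ n, ‖c n‖ ≤ M * R ^ n) :
    ContDiffOn ℝ 2 (fun w : ℂ => ∑' n : ℕ, c n * w ^ (-(n:ℤ)))
      {w : ℂ | 4/3 * R < ‖w‖} ∧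
    ∀ z : ℂ, 3/2 * R ≤ ‖z‖ →
      ‖iteratedFDeriv ℝ 2 (fun w : ℂ => ∑' n : ℕ, c n * w ^ (-(n:ℤ))) z‖ ≤
        (3/2 * ∑' n : ℕ, (n : ℝ) * ((n:ℝ) + 1) * (2/3) ^ n) * M * R * (‖z‖ ^ 3)⁻¹ := by
  have hSopen : IsOpen {w : ℂ | 4/3 * R < ‖w‖} :=
    isOpen_lt continuous_const continuous_norm
  have hSpre : IsPreconnected {w : ℂ | 4/3 * R < ‖w‖} :=
    isPreconnected_ext (by positivity)
  have hmem : ∀ w : ℂ, w ∈ {w : ℂ | 4/3 * R < ‖w‖} → 4/3 * R < ‖w‖ := by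
    intro w hw; exact hw
  have hpos : ∀ w : ℂ, w ∈ {w : ℂ | 4/3 * R < ‖w‖} → 0 < ‖w‖ := by
    intro w hw; have := hmem w hw; nlinarith
  have hne : ∀ w : ℂ, w ∈ {w : ℂ | 4/3 * R < ‖w‖} → w ≠ 0 := by
    intro w hw h0; rw [h0] at hw; simp only [Set.mem_setOf_eq, norm_zero] at hw; nlinarith
  -- derivative formulas
  have hd1 : ∀ (n : ℕ) (w : ℂ), w ≠ 0 →
      HasDerivAt (fun w : ℂ => c n * w ^ (-(n:ℤ)))
        (c n * -(n:ℂ) * w ^ (-(n:ℤ) - 1)) w := by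
    intro n w hw
    have h := (hasDerivAt_zpow (-(n:ℤ)) w (Or.inl hw)).const_mul (c n)
    refine h.congr_deriv ?_
    push_cast
    ring
  have hd2 : ∀ (n : ℕ) (w : ℂ), w ≠ 0 →
      HasDerivAt (fun w : ℂ => c n * -(n:ℂ) * w ^ (-(n:ℤ) - 1))
        (c n * -(n:ℂ) * (-(n:ℂ) - 1) * w ^ (-(n:ℤ) - 2)) w := by
    intro n w hw
    have h := (hasDerivAt_zpow (-(n:ℤ) - 1) w (Or.inl hw)).const_mul (c n * -(n:ℂ))
    have e : (-(n:ℤ) - 1 - 1) = (-(n:ℤ) - 2) := by ring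
    rw [e] at h
    refine h.congr_deriv ?_
    push_cast
    ring
  -- norms of the derivative terms
  have hn1 : ∀ (n : ℕ) (w : ℂ),
      ‖c n * -(n:ℂ) * w ^ (-(n:ℤ) - 1)‖ = ‖c n‖ * (n:ℝ) * (‖w‖ ^ (n+1))⁻¹ := by
    intro n w
    rw [show (-(n:ℤ) - 1) = -((n+1:ℕ):ℤ) by push_cast; ring, norm_mul_zpow_neg,
      norm_mul, norm_neg]
    simp [mul_assoc]
  have hn2 : ∀ (n : ℕ) (w : ℂ),
      ‖c n * -(n:ℂ) * (-(n:ℂ) - 1) * w ^ (-(n:ℤ) - 2)‖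
        = ‖c n‖ * ((n:ℝ) * ((n:ℝ)+1)) * (‖w‖ ^ (n+2))⁻¹ := by
    intro n w
    rw [show (-(n:ℤ) - 2) = -((n+2:ℕ):ℤ) by push_cast; ring, norm_mul_zpow_neg,
      norm_mul, norm_mul, norm_neg]
    have e2 : ‖(-(n:ℂ) - 1)‖ = (n:ℝ) + 1 := by
      rw [show (-(n:ℂ) - 1) = -(((n+1:ℕ):ℂ)) by push_cast; ring, norm_neg,
        Complex.norm_natCast]
      push_cast
      ring
    rw [e2]
    simp [mul_assoc]
  -- uniform bounds on S
  have hu1 : ∀ (n : ℕ) (w : ℂ), w ∈ {w : ℂ | 4/3 * R < ‖w‖} →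
      ‖c n * -(n:ℂ) * w ^ (-(n:ℤ) - 1)‖ ≤ M * (3/(4*R)) * ((n:ℝ) * (3/4) ^ n) := by
    intro n w hw
    rw [hn1]
    have h1 : ‖c n‖ * (n:ℝ) * (‖w‖ ^ (n+1))⁻¹ ≤ (M * R^n) * (n:ℝ) * ((4/3 * R) ^ (n+1))⁻¹ := by
      gcongr
      · exact hc n
      · exact (hmem w hw).le
    refine h1.trans (le_of_eq ?_)
    have hRne : R ≠ 0 := hR.ne'
    field_simp
    have h34 : ((3:ℝ)/4)^n * (4/3)^n = 1 := by rw [← mul_pow]; norm_num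
    linear_combination (-(M*R*R^n*n*4)) * h34
  have hu2 : ∀ (n : ℕ) (w : ℂ), w ∈ {w : ℂ | 4/3 * R < ‖w‖} →
      ‖c n * -(n:ℂ) * (-(n:ℂ) - 1) * w ^ (-(n:ℤ) - 2)‖
        ≤ M * (9/(16*R^2)) * (((n:ℝ) * ((n:ℝ)+1)) * (3/4) ^ n) := by
    intro n w hw
    rw [hn2]
    have h1 : ‖c n‖ * ((n:ℝ) * ((n:ℝ)+1)) * (‖w‖ ^ (n+2))⁻¹
        ≤ (M * R^n) * ((n:ℝ) * ((n:ℝ)+1)) * ((4/3 * R) ^ (n+2))⁻¹ := by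
      gcongr
      · exact hc n
      · exact (hmem w hw).le
    refine h1.trans (le_of_eq ?_)
    have hRne : R ≠ 0 := hR.ne'
    field_simp
    have h34 : ((3:ℝ)/4)^n * (4/3)^n = 1 := by rw [← mul_pow]; norm_num
    linear_combination (-(M*R^2*R^n*n*16)) * h34
  have su1 : Summable (fun n : ℕ => M * (3/(4*R)) * ((n:ℝ) * (3/4) ^ n)) := by
    apply Summable.mul_left
    have := summable_pow_mul_geometric_of_norm_lt_one (R := ℝ) 1 (r := 3/4) (by norm_num)
    simpa [pow_one] using this
  have su2 : Summable (fun n : ℕ => M * (9/(16*R^2)) * (((n:ℝ) * ((n:ℝ)+1)) * (3/4) ^ n)) :=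
    Summable.mul_left _ (sumNN (by norm_num) (by norm_num))
  -- summability of the series itself on S
  have hsumW : ∀ w : ℂ, w ∈ {w : ℂ | 4/3 * R < ‖w‖} →
      Summable (fun n : ℕ => c n * w ^ (-(n:ℤ))) := by
    intro w hw
    apply Summable.of_norm_bounded (g := fun n : ℕ => M * (3/4)^n)
      ((summable_geometric_of_lt_one (by norm_num) (by norm_num)).mul_left M)
    intro n
    rw [norm_mul_zpow_neg]
    have hwp := hpos w hw
    calc ‖c n‖ * (‖w‖ ^ n)⁻¹ ≤ (M * R^n) * ((4/3*R) ^ n)⁻¹ := by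
          gcongr
          · exact hc n
          · exact (hmem w hw).le
      _ = M * (3/4)^n := by
          have hRne : R ≠ 0 := hR.ne'
          field_simp
          have h34 : ((3:ℝ)/4)^n * (4/3)^n = 1 := by rw [← mul_pow]; norm_num
          linear_combination (-(M*R^n)) * h34
  -- the basepoint
  have hy₀ : ((2*R : ℝ) : ℂ) ∈ {w : ℂ | 4/3 * R < ‖w‖} := by
    simp only [Set.mem_setOf_eq, Complex.norm_real, Real.norm_eq_abs]
    rw [abs_of_pos (by linarith)]
    linarith
  -- first derivative of the sum
  have hW : ∀ y ∈ {w : ℂ | 4/3 * R < ‖w‖},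
      HasDerivAt (fun w : ℂ => ∑' n : ℕ, c n * w ^ (-(n:ℤ)))
        (∑' n : ℕ, c n * -(n:ℂ) * y ^ (-(n:ℤ) - 1)) y := by
    intro y hy
    exact hasDerivAt_tsum_of_isPreconnected su1 hSopen hSpre
      (fun n w hw => hd1 n w (hne w hw)) hu1 hy₀ (hsumW _ hy₀) hy
  constructor
  · have hdiff : DifferentiableOn ℂ (fun w : ℂ => ∑' n : ℕ, c n * w ^ (-(n:ℤ)))
        {w : ℂ | 4/3 * R < ‖w‖} :=
      fun y hy => ((hW y hy).differentiableAt).differentiableWithinAt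
    exact ContDiffOn.restrict_scalars (𝕜 := ℝ) (hdiff.contDiffOn (n := 2) hSopen)
  intro z hz
  have hzS : z ∈ {w : ℂ | 4/3 * R < ‖w‖} := by
    simp only [Set.mem_setOf_eq]; linarith
  have hz' : 3/2 * R ≤ ‖z‖ := by exact hz
  have hzp : 0 < ‖z‖ := by nlinarith
  have hsum1 : Summable (fun n : ℕ => c n * -(n:ℂ) * z ^ (-(n:ℤ) - 1)) :=
    Summable.of_norm_bounded su1 (fun n => hu1 n z hzS)
  have hW1 : HasDerivAt (fun y : ℂ => ∑' n : ℕ, c n * -(n:ℂ) * y ^ (-(n:ℤ) - 1))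
      (∑' n : ℕ, c n * -(n:ℂ) * (-(n:ℂ) - 1) * z ^ (-(n:ℤ) - 2)) z :=
    hasDerivAt_tsum_of_isPreconnected su2 hSopen hSpre
      (fun n w hw => hd2 n w (hne w hw)) hu2 hzS hsum1 hzS
  set D2 : ℂ := ∑' n : ℕ, c n * -(n:ℂ) * (-(n:ℂ) - 1) * z ^ (-(n:ℤ) - 2) with hD2
  set Lmul : ℂ →L[ℝ] ℂ →L[ℝ] ℂ := ContinuousLinearMap.mul ℝ ℂ with hLmul
  have hrepr : ∀ y ∈ {w : ℂ | 4/3 * R < ‖w‖},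
      fderiv ℝ (fun w : ℂ => ∑' n : ℕ, c n * w ^ (-(n:ℤ))) y
        = Lmul (∑' n : ℕ, c n * -(n:ℂ) * y ^ (-(n:ℤ) - 1)) := by
    intro y hy
    have h1 := ((hW y hy).hasFDerivAt).restrictScalars ℝ
    have h2 : (ContinuousLinearMap.smulRight (1 : ℂ →L[ℂ] ℂ)
        (∑' n : ℕ, c n * -(n:ℂ) * y ^ (-(n:ℤ) - 1))).restrictScalars ℝ
        = Lmul (∑' n : ℕ, c n * -(n:ℂ) * y ^ (-(n:ℤ) - 1)) := by
      ext x
      simp [hLmul, ContinuousLinearMap.smulRight_apply, smul_eq_mul,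
        ContinuousLinearMap.mul_apply']
      ring
    rw [← h2]
    exact h1.fderiv
  have hev : fderiv ℝ (fun w : ℂ => ∑' n : ℕ, c n * w ^ (-(n:ℤ)))
      =ᶠ[nhds z] fun y => Lmul (∑' n : ℕ, c n * -(n:ℂ) * y ^ (-(n:ℤ) - 1)) :=
    Filter.eventuallyEq_of_mem (hSopen.mem_nhds hzS) hrepr
  have hkey : HasFDerivAt (fun y : ℂ => Lmul (∑' n : ℕ, c n * -(n:ℂ) * y ^ (-(n:ℤ) - 1)))
      (Lmul.comp ((ContinuousLinearMap.smulRight (1 : ℂ →L[ℂ] ℂ) D2).restrictScalars ℝ)) z :=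
    (Lmul.hasFDerivAt).comp z ((hW1.hasFDerivAt).restrictScalars ℝ)
  have hnorm2 : ‖iteratedFDeriv ℝ 2 (fun w : ℂ => ∑' n : ℕ, c n * w ^ (-(n:ℤ))) z‖ ≤ ‖D2‖ := by
    have e1 : ‖iteratedFDeriv ℝ 2 (fun w : ℂ => ∑' n : ℕ, c n * w ^ (-(n:ℤ))) z‖
        = ‖fderiv ℝ (fderiv ℝ (fun w : ℂ => ∑' n : ℕ, c n * w ^ (-(n:ℤ)))) z‖ := by
      rw [← norm_iteratedFDeriv_fderiv, ← norm_iteratedFDeriv_fderiv, norm_iteratedFDeriv_zero]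
    rw [e1, hev.fderiv_eq, hkey.fderiv]
    calc ‖Lmul.comp ((ContinuousLinearMap.smulRight (1 : ℂ →L[ℂ] ℂ) D2).restrictScalars ℝ)‖
        ≤ ‖Lmul‖ * ‖(ContinuousLinearMap.smulRight (1 : ℂ →L[ℂ] ℂ) D2).restrictScalars ℝ‖ :=
          ContinuousLinearMap.opNorm_comp_le _ _
      _ ≤ 1 * ‖(ContinuousLinearMap.smulRight (1 : ℂ →L[ℂ] ℂ) D2).restrictScalars ℝ‖ := by
          apply mul_le_mul_of_nonneg_right _ (norm_nonneg _)
          exact ContinuousLinearMap.opNorm_mul_le ℝ ℂ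
      _ = ‖D2‖ := by
          rw [one_mul, ContinuousLinearMap.norm_restrictScalars,
            ContinuousLinearMap.norm_smulRight_apply]
          simp
  -- final numeric bound
  have hq : R / ‖z‖ ≤ 2/3 := by rw [div_le_iff₀ hzp]; linarith
  have hq0 : 0 ≤ R / ‖z‖ := by positivity
  have hsn : Summable (fun n : ℕ => ‖c n * -(n:ℂ) * (-(n:ℂ) - 1) * z ^ (-(n:ℤ) - 2)‖) :=
    Summable.of_nonneg_of_le (fun n => norm_nonneg _) (fun n => hu2 n z hzS) su2
  have hscal : ∀ n : ℕ, (n:ℝ) * ((n:ℝ)+1) * (R^n * (‖z‖ ^ (n+2))⁻¹)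
      ≤ (n:ℝ) * ((n:ℝ)+1) * (3/2 * R * (‖z‖^3)⁻¹ * (2/3)^n) := by
    intro n
    cases n with
    | zero => simp
    | succ m =>
      have h2 : R^(m+1) * (‖z‖ ^ (m+1+2))⁻¹ ≤ 3/2 * R * (‖z‖^3)⁻¹ * (2/3)^(m+1) := by
        have e : R^(m+1) * (‖z‖ ^ (m+1+2))⁻¹ = R * (R/‖z‖)^m * (‖z‖^3)⁻¹ := by
          rw [div_pow]
          field_simp
          ring
        rw [e]
        calc R * (R/‖z‖)^m * (‖z‖^3)⁻¹ ≤ R * (2/3)^m * (‖z‖^3)⁻¹ := by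
              gcongr
          _ = 3/2 * R * (‖z‖^3)⁻¹ * (2/3)^(m+1) := by ring
      have hP : (0:ℝ) ≤ ((m+1:ℕ):ℝ) * (((m+1:ℕ):ℝ)+1) := by positivity
      exact mul_le_mul_of_nonneg_left h2 hP
  have hterm : ∀ n : ℕ, ‖c n * -(n:ℂ) * (-(n:ℂ) - 1) * z ^ (-(n:ℤ) - 2)‖
      ≤ (3/2 * M * R * (‖z‖^3)⁻¹) * ((n:ℝ) * ((n:ℝ)+1) * (2/3) ^ n) := by
    intro n
    rw [hn2]
    calc ‖c n‖ * ((n:ℝ) * ((n:ℝ)+1)) * (‖z‖ ^ (n+2))⁻¹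
        ≤ (M * R^n) * ((n:ℝ) * ((n:ℝ)+1)) * (‖z‖ ^ (n+2))⁻¹ := by
          gcongr
          exact hc n
      _ = M * ((n:ℝ) * ((n:ℝ)+1) * (R^n * (‖z‖ ^ (n+2))⁻¹)) := by ring
      _ ≤ M * ((n:ℝ) * ((n:ℝ)+1) * (3/2 * R * (‖z‖^3)⁻¹ * (2/3)^n)) :=
          mul_le_mul_of_nonneg_left (hscal n) hM
      _ = (3/2 * M * R * (‖z‖^3)⁻¹) * ((n:ℝ) * ((n:ℝ)+1) * (2/3) ^ n) := by ring
  have hDbound : ‖D2‖ ≤ (3/2 * M * R * (‖z‖^3)⁻¹)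
      * ∑' n : ℕ, (n : ℝ) * ((n:ℝ) + 1) * (2/3) ^ n := by
    calc ‖D2‖ ≤ ∑' n : ℕ, ‖c n * -(n:ℂ) * (-(n:ℂ) - 1) * z ^ (-(n:ℤ) - 2)‖ :=
          norm_tsum_le_tsum_norm hsn
      _ ≤ ∑' n : ℕ, (3/2 * M * R * (‖z‖^3)⁻¹) * ((n:ℝ) * ((n:ℝ)+1) * (2/3) ^ n) :=
          Summable.tsum_le_tsum hterm hsn ((sumNN (by norm_num) (by norm_num)).mul_left _)
      _ = (3/2 * M * R * (‖z‖^3)⁻¹) * ∑' n : ℕ, (n : ℝ) * ((n:ℝ) + 1) * (2/3) ^ n :=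
          tsum_mul_left
  refine hnorm2.trans (hDbound.trans (le_of_eq ?_))
  ring

lemma term_pos {R : ℝ} (hR : 0 < R) (a : ℤ → ℂ) (w : ℂ) (hw : w ≠ 0) (n : ℕ) :
    a (n:ℤ) * (((R / ‖w‖) ^ ((n:ℤ)).natAbs : ℝ) : ℂ) * (w / (‖w‖ : ℝ)) ^ (n:ℤ)
      = (a (n:ℤ) * ((R:ℝ):ℂ)^n) * ((starRingEnd ℂ) w) ^ (-(n:ℤ)) := by
  have hA : ((‖w‖ : ℝ) : ℂ) ≠ 0 := by
    simpa using norm_ne_zero_iff.mpr hw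
  have hcw : (starRingEnd ℂ) w ≠ 0 := by simpa using hw
  have hA2 : ((‖w‖ : ℝ) : ℂ) * ((‖w‖ : ℝ) : ℂ) = w * (starRingEnd ℂ) w := by
    rw [Complex.mul_conj, Complex.normSq_eq_norm_sq]
    push_cast
    ring
  have hnat : ((n:ℤ)).natAbs = n := Int.natAbs_natCast n
  rw [hnat, zpow_natCast, zpow_neg, zpow_natCast, Complex.ofReal_pow, Complex.ofReal_div]
  have key : (((R:ℝ):ℂ)/((‖w‖ : ℝ):ℂ)) * (w/((‖w‖ : ℝ):ℂ))
      = ((R:ℝ):ℂ) * ((starRingEnd ℂ) w)⁻¹ := by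
    rw [div_mul_div_comm, hA2]
    field_simp
  calc a (n:ℤ) * (((R:ℝ):ℂ)/((‖w‖ : ℝ):ℂ))^n * (w/((‖w‖ : ℝ):ℂ))^n
      = a (n:ℤ) * ((((R:ℝ):ℂ)/((‖w‖ : ℝ):ℂ)) * (w/((‖w‖ : ℝ):ℂ)))^n := by
        rw [mul_pow]; ring
    _ = a (n:ℤ) * (((R:ℝ):ℂ) * ((starRingEnd ℂ) w)⁻¹)^n := by rw [key]
    _ = a (n:ℤ) * ((R:ℝ):ℂ)^n * (((starRingEnd ℂ) w)^n)⁻¹ := by rw [mul_pow, inv_pow]; ring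

lemma term_neg {R : ℝ} (hR : 0 < R) (a : ℤ → ℂ) (w : ℂ) (hw : w ≠ 0) (n : ℕ) :
    a (-((n:ℤ)+1)) * (((R / ‖w‖) ^ ((-((n:ℤ)+1))).natAbs : ℝ) : ℂ)
        * (w / (‖w‖ : ℝ)) ^ (-((n:ℤ)+1))
      = (a (-((n:ℤ)+1)) * ((R:ℝ):ℂ)^(n+1)) * w ^ (-(((n+1:ℕ)):ℤ)) := by
  have hA : ((‖w‖ : ℝ) : ℂ) ≠ 0 := by
    simpa using norm_ne_zero_iff.mpr hw
  have hnat : ((-((n:ℤ)+1))).natAbs = n + 1 := by omega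
  have hexp : (-((n:ℤ)+1)) = -(((n+1:ℕ)):ℤ) := by push_cast; ring
  rw [hnat, hexp, zpow_neg, zpow_natCast, zpow_neg, zpow_natCast,
    Complex.ofReal_pow, Complex.ofReal_div]
  have key : (((R:ℝ):ℂ)/((‖w‖ : ℝ):ℂ)) / (w/((‖w‖ : ℝ):ℂ))
      = ((R:ℝ):ℂ) / w := by
    field_simp
  calc a (-((n:ℤ)+1)) * (((R:ℝ):ℂ)/((‖w‖ : ℝ):ℂ))^(n+1)
        * ((w/((‖w‖ : ℝ):ℂ))^(n+1))⁻¹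
      = a (-((n:ℤ)+1)) * ((((R:ℝ):ℂ)/((‖w‖ : ℝ):ℂ)) / (w/((‖w‖ : ℝ):ℂ)))^(n+1) := by
        rw [div_pow, div_eq_mul_inv]; ring
    _ = a (-((n:ℤ)+1)) * (((R:ℝ):ℂ)/w)^(n+1) := by rw [key]
    _ = a (-((n:ℤ)+1)) * ((R:ℝ):ℂ)^(n+1) * (w^(n+1))⁻¹ := by
        rw [div_pow, div_eq_mul_inv]; ring

/-- **Decay of the Hessian of the exterior harmonic extension.**
There is an absolute constant `C > 0` such that: for all `R > 0`, `M ≥ 0` and square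
summable boundary Fourier coefficients `(a_k)` with `∑_{k∈ℤ} |a_k|² ≤ M²`, the exterior
harmonic extension `w(z) = ∑_{k∈ℤ} a_k (R/|z|)^{|k|} (z/|z|)^k` satisfies
`‖D²w(z)‖ ≤ C M R |z|⁻³` for all `z` with `|z| ≥ (3/2) R`. -/
theorem stmt_8 :
    ∃ C : ℝ, 0 < C ∧ ∀ (R M : ℝ), 0 < R → 0 ≤ M → ∀ a : ℤ → ℂ,
      Summable (fun k : ℤ => ‖a k‖ ^ 2) →
      (∑' k : ℤ, ‖a k‖ ^ 2) ≤ M ^ 2 →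
      ∀ z : ℂ, (3 / 2) * R ≤ ‖z‖ →
        ‖iteratedFDeriv ℝ 2
            (fun w : ℂ =>
              ∑' k : ℤ, a k * (((R / ‖w‖) ^ k.natAbs : ℝ) : ℂ) *
                (w / ‖w‖) ^ k) z‖
          ≤ C * M * R * ((‖z‖) ^ 3)⁻¹ := by
  have hT0 : (0:ℝ) ≤ ∑' n : ℕ, (n : ℝ) * ((n:ℝ) + 1) * (2/3) ^ n :=
    tsum_nonneg (fun n => by positivity)
  refine ⟨3 * (∑' n : ℕ, (n : ℝ) * ((n:ℝ) + 1) * (2/3) ^ n) + 1, by linarith, ?_⟩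
  intro R M hR hM a hsum hle z hz
  have habs : ∀ k : ℤ, ‖a k‖ ≤ M := by
    intro k
    have h1 : ‖a k‖^2 ≤ M^2 :=
      le_trans (hsum.le_tsum k (fun j _ => by positivity)) hle
    nlinarith [norm_nonneg (a k)]
  have hRnorm : ∀ n : ℕ, ‖((R:ℝ):ℂ)^n‖ = R^n := by
    intro n
    rw [norm_pow, Complex.norm_real, Real.norm_eq_abs, abs_of_pos hR]
  set c₁ : ℕ → ℂ := fun n => if n = 0 then 0 else a (-(n:ℤ)) * ((R:ℝ):ℂ)^n with hc₁def
  set c₂ : ℕ → ℂ := fun n => a (n:ℤ) * ((R:ℝ):ℂ)^n with hc₂def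
  have hb₁ : ∀ n, ‖c₁ n‖ ≤ M * R^n := by
    intro n
    rw [hc₁def]
    cases n with
    | zero => simp; positivity
    | succ m =>
      simp only [Nat.succ_ne_zero, if_false, norm_mul, hRnorm]
      exact mul_le_mul_of_nonneg_right (habs _) (by positivity)
  have hb₂ : ∀ n, ‖c₂ n‖ ≤ M * R^n := by
    intro n
    rw [hc₂def]
    simp only [norm_mul, hRnorm]
    exact mul_le_mul_of_nonneg_right (habs _) (by positivity)
  obtain ⟨hC1, hB1⟩ := core hR hM c₁ hb₁
  obtain ⟨hC2, hB2⟩ := core hR hM c₂ hb₂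
  have hSopen : IsOpen {w : ℂ | 4/3 * R < ‖w‖} :=
    isOpen_lt continuous_const continuous_norm
  have hzS : z ∈ {w : ℂ | 4/3 * R < ‖w‖} := by
    simp only [Set.mem_setOf_eq]; linarith
  have hne : ∀ w : ℂ, w ∈ {w : ℂ | 4/3 * R < ‖w‖} → w ≠ 0 := by
    intro w hw h0
    rw [h0] at hw
    simp only [Set.mem_setOf_eq, norm_zero] at hw
    nlinarith
  -- the conjugated sum
  have hHeq : (fun w : ℂ => ∑' n : ℕ, c₂ n * ((starRingEnd ℂ) w) ^ (-(n:ℤ)))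
      = (fun w : ℂ => ∑' n : ℕ, c₂ n * w ^ (-(n:ℤ))) ∘ ⇑Complex.conjLIE := by
    funext w
    simp only [Function.comp_apply, Complex.conjLIE_apply]
  have hmaps : Set.MapsTo (⇑Complex.conjLIE) {w : ℂ | 4/3 * R < ‖w‖}
      {w : ℂ | 4/3 * R < ‖w‖} := by
    intro w hw
    simp only [Set.mem_setOf_eq, Complex.conjLIE_apply, Complex.norm_conj]
    exact hw
  have hCH : ContDiffOn ℝ 2 (fun w : ℂ => ∑' n : ℕ, c₂ n * ((starRingEnd ℂ) w) ^ (-(n:ℤ)))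
      {w : ℂ | 4/3 * R < ‖w‖} := by
    rw [hHeq]
    exact hC2.comp (Complex.conjLIE.contDiff.contDiffOn) hmaps
  -- identification of the series on S
  have hFeq : Set.EqOn
      (fun w : ℂ => ∑' k : ℤ, a k * (((R / ‖w‖) ^ k.natAbs : ℝ) : ℂ) *
        (w / ‖w‖) ^ k)
      (fun w : ℂ => (∑' n : ℕ, c₁ n * w ^ (-(n:ℤ)))
        + (∑' n : ℕ, c₂ n * ((starRingEnd ℂ) w) ^ (-(n:ℤ))))
      {w : ℂ | 4/3 * R < ‖w‖} := by
    intro w hw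
    have hw0 : w ≠ 0 := hne w hw
    have hwb : 4/3 * R < ‖w‖ := by exact hw
    have hwp : (0:ℝ) < ‖w‖ := by nlinarith
    have hgeo : Summable (fun n : ℕ => M * (3/4 : ℝ)^n) :=
      (summable_geometric_of_lt_one (by norm_num) (by norm_num)).mul_left M
    have hbnd : ∀ (b : ℕ → ℂ) (v : ℂ), (∀ n, ‖b n‖ ≤ M * R^n) → ‖v‖ = ‖w‖ →
        Summable (fun n : ℕ => b n * v ^ (-(n:ℤ))) := by
      intro b v hb hv
      apply Summable.of_norm_bounded hgeo
      intro n
      rw [norm_mul, norm_zpow, zpow_neg, zpow_natCast, hv]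
      calc ‖b n‖ * (‖w‖^n)⁻¹ ≤ (M * R^n) * ((4/3*R)^n)⁻¹ := by
            gcongr <;> first
              | exact hb n
              | exact hwb.le
              | positivity
        _ = M * (3/4)^n := by
            have : R ≠ 0 := hR.ne'
            field_simp
            have h34 : ((3:ℝ)/4)^n * (4/3)^n = 1 := by rw [← mul_pow]; norm_num
            linear_combination (-(M*R^n)) * h34
    have hs1 : Summable (fun n : ℕ => c₁ n * w ^ (-(n:ℤ))) := hbnd c₁ w hb₁ rfl
    have hs2 : Summable (fun n : ℕ => c₂ n * ((starRingEnd ℂ) w) ^ (-(n:ℤ))) :=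
      hbnd c₂ _ hb₂ (by rw [Complex.norm_conj])
    have h1sum : HasSum (fun n : ℕ => c₁ n * w ^ (-(n:ℤ)))
        (∑' n : ℕ, c₁ n * w ^ (-(n:ℤ))) := hs1.hasSum
    have h2sum : HasSum (fun n : ℕ => c₂ n * ((starRingEnd ℂ) w) ^ (-(n:ℤ)))
        (∑' n : ℕ, c₂ n * ((starRingEnd ℂ) w) ^ (-(n:ℤ))) := hs2.hasSum
    have h1' : HasSum (fun n : ℕ => c₁ (n+1) * w ^ (-(((n+1:ℕ)):ℤ)))
        (∑' n : ℕ, c₁ n * w ^ (-(n:ℤ))) := by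
      refine (hasSum_nat_add_iff (f := fun n : ℕ => c₁ n * w ^ (-(n:ℤ))) 1).mpr ?_
      have hf0 : c₁ 0 * w ^ (-(0:ℕ):ℤ) = 0 := by simp [hc₁def]
      rw [Finset.range_one, Finset.sum_singleton]
      simpa [hc₁def] using h1sum
    have hposeq : (fun n : ℕ => a (n:ℤ) * (((R / ‖w‖) ^ ((n:ℤ)).natAbs : ℝ) : ℂ) *
        (w / (‖w‖ : ℝ)) ^ (n:ℤ))
        = fun n : ℕ => c₂ n * ((starRingEnd ℂ) w) ^ (-(n:ℤ)) := by
      funext n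
      rw [term_pos hR a w hw0 n, hc₂def]
    have hnegeq : (fun n : ℕ => a (-((n:ℤ)+1)) *
          (((R / ‖w‖) ^ ((-((n:ℤ)+1))).natAbs : ℝ) : ℂ) *
          (w / (‖w‖ : ℝ)) ^ (-((n:ℤ)+1)))
        = fun n : ℕ => c₁ (n+1) * w ^ (-(((n+1:ℕ)):ℤ)) := by
      funext n
      rw [term_neg hR a w hw0 n, hc₁def]
      simp only [Nat.succ_ne_zero, if_false]
      norm_num
    have htotal : HasSum (fun k : ℤ => a k * (((R / ‖w‖) ^ k.natAbs : ℝ) : ℂ) *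
        (w / (‖w‖ : ℝ)) ^ k)
        ((∑' n : ℕ, c₂ n * ((starRingEnd ℂ) w) ^ (-(n:ℤ)))
          + (∑' n : ℕ, c₁ n * w ^ (-(n:ℤ)))) := by
      apply HasSum.of_nat_of_neg_add_one
      · rw [hposeq]; exact h2sum
      · rw [hnegeq]; exact h1'
    simp only
    rw [htotal.tsum_eq, add_comm]
  -- main computation
  calc ‖iteratedFDeriv ℝ 2 (fun w : ℂ => ∑' k : ℤ,
        a k * (((R / ‖w‖) ^ k.natAbs : ℝ) : ℂ) * (w / ‖w‖) ^ k) z‖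
      = ‖iteratedFDerivWithin ℝ 2 (fun w : ℂ => ∑' k : ℤ,
          a k * (((R / ‖w‖) ^ k.natAbs : ℝ) : ℂ) * (w / ‖w‖) ^ k)
          {w : ℂ | 4/3 * R < ‖w‖} z‖ := by
        rw [iteratedFDerivWithin_of_isOpen 2 hSopen hzS]
    _ = ‖iteratedFDerivWithin ℝ 2 (fun w : ℂ => (∑' n : ℕ, c₁ n * w ^ (-(n:ℤ)))
          + (∑' n : ℕ, c₂ n * ((starRingEnd ℂ) w) ^ (-(n:ℤ))))
          {w : ℂ | 4/3 * R < ‖w‖} z‖ := by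
        rw [iteratedFDerivWithin_congr hFeq hzS 2]
    _ = ‖iteratedFDerivWithin ℝ 2 (fun w : ℂ => ∑' n : ℕ, c₁ n * w ^ (-(n:ℤ)))
          {w : ℂ | 4/3 * R < ‖w‖} z
        + iteratedFDerivWithin ℝ 2 (fun w : ℂ => ∑' n : ℕ, c₂ n * ((starRingEnd ℂ) w) ^ (-(n:ℤ)))
          {w : ℂ | 4/3 * R < ‖w‖} z‖ := by
        rw [iteratedFDerivWithin_add_apply' (hC1 z hzS) (hCH z hzS) hSopen.uniqueDiffOn hzS]
    _ ≤ ‖iteratedFDerivWithin ℝ 2 (fun w : ℂ => ∑' n : ℕ, c₁ n * w ^ (-(n:ℤ)))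
          {w : ℂ | 4/3 * R < ‖w‖} z‖
        + ‖iteratedFDerivWithin ℝ 2 (fun w : ℂ => ∑' n : ℕ, c₂ n * ((starRingEnd ℂ) w) ^ (-(n:ℤ)))
          {w : ℂ | 4/3 * R < ‖w‖} z‖ := norm_add_le _ _
    _ = ‖iteratedFDeriv ℝ 2 (fun w : ℂ => ∑' n : ℕ, c₁ n * w ^ (-(n:ℤ))) z‖
        + ‖iteratedFDeriv ℝ 2 (fun w : ℂ => ∑' n : ℕ, c₂ n * ((starRingEnd ℂ) w) ^ (-(n:ℤ))) z‖ := by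
        rw [iteratedFDerivWithin_of_isOpen 2 hSopen hzS,
          iteratedFDerivWithin_of_isOpen 2 hSopen hzS]
    _ ≤ (3/2 * ∑' n : ℕ, (n : ℝ) * ((n:ℝ) + 1) * (2/3) ^ n) * M * R * (‖z‖ ^ 3)⁻¹
        + (3/2 * ∑' n : ℕ, (n : ℝ) * ((n:ℝ) + 1) * (2/3) ^ n) * M * R * (‖z‖ ^ 3)⁻¹ := by
        apply add_le_add
        · exact hB1 z hz
        · have heq : ‖iteratedFDeriv ℝ 2
              (fun w : ℂ => ∑' n : ℕ, c₂ n * ((starRingEnd ℂ) w) ^ (-(n:ℤ))) z‖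
              = ‖iteratedFDeriv ℝ 2 (fun w : ℂ => ∑' n : ℕ, c₂ n * w ^ (-(n:ℤ)))
                (Complex.conjLIE z)‖ := by
            rw [hHeq]
            exact Complex.conjLIE.norm_iteratedFDeriv_comp_right _ z 2
          rw [heq]
          have := hB2 (Complex.conjLIE z) (by
            simp only [Complex.conjLIE_apply, Complex.norm_conj]; exact hz)
          simpa [Complex.conjLIE_apply, Complex.norm_conj] using this
    _ ≤ (3 * (∑' n : ℕ, (n : ℝ) * ((n:ℝ) + 1) * (2/3) ^ n) + 1) * M * R
        * (‖z‖ ^ 3)⁻¹ := by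
        have hX : (0:ℝ) ≤ M * R * (‖z‖ ^ 3)⁻¹ := by positivity
        nlinarith
end
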